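/- For every n ≥ 1, the Catalan number C_n is odd if and only if n = 2^r − 1 for some integer r ≥ 1; moreover C_0 = 1 is odd. -/

import Mathlib

open Finset

lemma cat_even (m : ℕ) : (catalan (2*m+2) : ZMod 2) = 0 := by
  rw [catalan_succ']
  push_cast
  apply Finset.sum_involution (fun p _ => Prod.swap p)
  · intro p hp
    show (catalan p.1 : ZMod 2) * catalan p.2 + (catalan p.2 : ZMod 2) * catalan p.1 = 0
    rw [mul_comm (catalan p.2 : ZMod 2)]
    exact CharTwo.add_self_eq_zero _
  · intro p hp _
    rw [Finset.HasAntidiagonal.mem_antidiagonal] at hp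
    intro h
    have h1 : p.2 = p.1 := congrArg Prod.fst h
    omega
  · intro p hp
    rw [Finset.HasAntidiagonal.mem_antidiagonal] at hp ⊢
    simpa using by omega
  · intro p hp; simp

lemma cat_odd (m : ℕ) : (catalan (2*m+1) : ZMod 2) = catalan m := by
  rw [catalan_succ']
  push_cast
  have hmem : (m, m) ∈ Finset.HasAntidiagonal.antidiagonal (2*m) := by
    rw [Finset.HasAntidiagonal.mem_antidiagonal]; omega
  have key : ∑ p ∈ Finset.HasAntidiagonal.antidiagonal (2*m), (catalan p.1 : ZMod 2) * catalan p.2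
      = ∑ p ∈ (Finset.HasAntidiagonal.antidiagonal (2*m)).erase (m,m), (catalan p.1 : ZMod 2) * catalan p.2
        + (catalan m : ZMod 2) * catalan m := by
    rw [← Finset.add_sum_erase _ (fun p => (catalan p.1 : ZMod 2) * catalan p.2) hmem]
    exact add_comm _ _
  rw [key]
  have h0 : ∑ p ∈ (Finset.HasAntidiagonal.antidiagonal (2*m)).erase (m,m),
      (catalan p.1 : ZMod 2) * catalan p.2 = 0 := by
    apply Finset.sum_involution (fun p _ => Prod.swap p)
    · intro p hp
      show (catalan p.1 : ZMod 2) * catalan p.2 + (catalan p.2 : ZMod 2) * catalan p.1 = 0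
      rw [mul_comm (catalan p.2 : ZMod 2)]
      exact CharTwo.add_self_eq_zero _
    · intro p hp _
      rw [Finset.mem_erase, Finset.HasAntidiagonal.mem_antidiagonal] at hp
      intro h
      have h1 : p.2 = p.1 := congrArg Prod.fst h
      apply hp.1
      have hp1 : p.1 = m := by omega
      have hp2 : p.2 = m := by omega
      exact Prod.ext hp1 hp2
    · intro p hp
      rw [Finset.mem_erase, Finset.HasAntidiagonal.mem_antidiagonal] at hp ⊢
      refine ⟨fun h => hp.1 ?_, by simpa using by omega⟩
      have h1 : p.2 = m := congrArg Prod.fst h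
      have h2 : p.1 = m := congrArg Prod.snd h
      exact Prod.ext h2 h1
    · intro p hp; simp
  rw [h0, zero_add]
  have : ∀ x : ZMod 2, x * x = x := by decide
  exact this _

lemma odd_iff_cast (k : ℕ) : Odd k ↔ (k : ZMod 2) = 1 := by
  rw [Nat.odd_iff, ← ZMod.natCast_mod]
  constructor
  · intro h; rw [h]; rfl
  · intro h
    rcases Nat.mod_two_eq_zero_or_one k with h0 | h1
    · rw [h0] at h; exact absurd h (by decide)
    · exact h1

lemma cat_main : ∀ n : ℕ, Odd (catalan n) ↔ ∃ r : ℕ, n = 2 ^ r - 1 := by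
  intro n
  induction n using Nat.strong_induction_on with
  | _ n ih =>
    match n, ih with
    | 0, _ => simpa [catalan_zero] using ⟨0, rfl⟩
    | (k+1), ih =>
      rcases Nat.even_or_odd k with he | ho
      · obtain ⟨m, hm⟩ := he
        have hn : k + 1 = 2*m + 1 := by omega
        rw [hn, odd_iff_cast, cat_odd, ← odd_iff_cast, ih m (by omega)]
        constructor
        · rintro ⟨r, rfl⟩
          refine ⟨r+1, ?_⟩
          have h1 : 1 ≤ 2 ^ r := Nat.one_le_two_pow
          have h2 : (2:ℕ) ^ (r+1) = 2 * 2 ^ r := by ring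
          omega
        · rintro ⟨r, hr⟩
          match r with
          | 0 => omega
          | s+1 =>
            refine ⟨s, ?_⟩
            have h1 : 1 ≤ (2:ℕ) ^ s := Nat.one_le_two_pow
            have h2 : (2:ℕ) ^ (s+1) = 2 * 2 ^ s := by ring
            omega
      · obtain ⟨m, hm⟩ := ho
        have hn : k + 1 = 2*m + 2 := by omega
        rw [hn]
        constructor
        · intro h
          rw [odd_iff_cast, cat_even] at h
          exact absurd h (by decide)
        · rintro ⟨r, hr⟩
          match r with
          | 0 => omega
          | s+1 =>
            have h1 : 1 ≤ (2:ℕ) ^ s := Nat.one_le_two_pow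
            have h2 : (2:ℕ) ^ (s+1) = 2 * 2 ^ s := by ring
            omega

theorem catalan_odd_iff :
    (∀ n : ℕ, 1 ≤ n → (Odd (catalan n) ↔ ∃ r : ℕ, 1 ≤ r ∧ n = 2 ^ r - 1)) ∧
      Odd (catalan 0) := by
  constructor
  · intro n hn
    rw [cat_main n]
    constructor
    · rintro ⟨r, rfl⟩
      match r with
      | 0 => omega
      | s+1 => exact ⟨s+1, by omega, rfl⟩
    · rintro ⟨r, _, hr⟩; exact ⟨r, hr⟩
  · simp [catalan_zero]
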